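/- Let (X, 𝒪_n) and (Y, 𝒪'_n) be operator spaces, let 𝒲_n be a numerical radius norm affiliated with (Y, 𝒪'_n), and let φ : X → Y be a completely bounded linear map. Then the 𝒲-completely bounded norm of φ regarded as a map from (X, 𝒲_max) to (Y, 𝒲_n) is at most 𝒪(φ)_cb. -/

import Mathlib

open scoped ComplexOrder Matrix ENNReal TensorProduct

universe u v

noncomputable section

/-- The block-diagonal sum `x ⊕ y` of two square matrices. -/
def blockDiag {X : Type*} [Zero X] {m n : ℕ} (x : Matrix (Fin m) (Fin m) X)
    (y : Matrix (Fin n) (Fin n) X) : Matrix (Fin (m + n)) (Fin (m + n)) X :=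
  Matrix.submatrix (Matrix.fromBlocks x 0 0 y) finSumFinEquiv.symm finSumFinEquiv.symm

/-- The block matrix `[[0, x], [0, 0]]` with `x` in the upper-right corner. -/
def cornerBlock {X : Type*} [Zero X] {n : ℕ} (x : Matrix (Fin n) (Fin n) X) :
    Matrix (Fin (n + n)) (Fin (n + n)) X :=
  Matrix.submatrix (Matrix.fromBlocks 0 x 0 0) finSumFinEquiv.symm finSumFinEquiv.symm

/-- Multiplication `α x` of a scalar matrix with a matrix over a ℂ-module. -/
def scalarMulLeft {X : Type*} [AddCommMonoid X] [Module ℂ X] {m n k : ℕ}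
    (α : Matrix (Fin m) (Fin n) ℂ) (x : Matrix (Fin n) (Fin k) X) :
    Matrix (Fin m) (Fin k) X :=
  Matrix.of fun i j => ∑ l, α i l • x l j

/-- Multiplication `x β` of a matrix over a ℂ-module with a scalar matrix. -/
def scalarMulRight {X : Type*} [AddCommMonoid X] [Module ℂ X] {m n k : ℕ}
    (x : Matrix (Fin m) (Fin n) X) (β : Matrix (Fin n) (Fin k) ℂ) :
    Matrix (Fin m) (Fin k) X :=
  Matrix.of fun i j => ∑ l, β l j • x i l

/-- Operator norm of a rectangular complex matrix, as an operator ℓ²(Fin n) → ℓ²(Fin m). -/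
def matOpNorm {m n : ℕ} (α : Matrix (Fin m) (Fin n) ℂ) : ℝ :=
  ‖LinearMap.toContinuousLinearMap (Matrix.toEuclideanLin α)‖

/-- The numerical radius of a bounded operator on a complex inner product space. -/
def numRadius {H : Type*} [NormedAddCommGroup H] [InnerProductSpace ℂ H]
    (a : H →L[ℂ] H) : ℝ :=
  ⨆ ξ : {ξ : H // ‖ξ‖ ≤ 1}, ‖(inner ℂ (ξ : H) (a ξ) : ℂ)‖

/-- The bounded operator `Hⁿ → Hᵐ` induced by an `m × n` matrix of bounded operators,
where `Hⁿ` carries the ℓ²-direct sum structure. -/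
def matOpRect {H : Type*} [NormedAddCommGroup H] [InnerProductSpace ℂ H] {m n : ℕ}
    (a : Matrix (Fin m) (Fin n) (H →L[ℂ] H)) :
    (PiLp 2 fun _ : Fin n => H) →L[ℂ] (PiLp 2 fun _ : Fin m => H) :=
  ((PiLp.continuousLinearEquiv 2 ℂ (fun _ : Fin m => H)).symm.toContinuousLinearMap) ∘L
    (ContinuousLinearMap.pi fun i => ∑ j, (a i j).comp (ContinuousLinearMap.proj j)) ∘L
    ((PiLp.continuousLinearEquiv 2 ℂ (fun _ : Fin n => H)).toContinuousLinearMap)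

/-- The bounded operator on `Hⁿ` induced by an `n × n` matrix of bounded operators. -/
def matOp {H : Type*} [NormedAddCommGroup H] [InnerProductSpace ℂ H] {n : ℕ}
    (a : Matrix (Fin n) (Fin n) (H →L[ℂ] H)) :
    (PiLp 2 fun _ : Fin n => H) →L[ℂ] (PiLp 2 fun _ : Fin n => H) :=
  matOpRect a

/-- The numerical radius of a complex `n × n` matrix, acting on `ℂⁿ`. -/
def matNumRadius {n : ℕ} (a : Matrix (Fin n) (Fin n) ℂ) : ℝ :=
  numRadius (LinearMap.toContinuousLinearMap (Matrix.toEuclideanLin a))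

/-- The identification of `M_k(M_n(ℂ))` with `M_{kn}(ℂ)`. -/
def flatten {k n : ℕ} (x : Matrix (Fin k) (Fin k) (Matrix (Fin n) (Fin n) ℂ)) :
    Matrix (Fin (k * n)) (Fin (k * n)) ℂ :=
  Matrix.of fun i j =>
    x (finProdFinEquiv.symm i).1 (finProdFinEquiv.symm j).1
      (finProdFinEquiv.symm i).2 (finProdFinEquiv.symm j).2

/-- An (abstract) numerical radius operator space: a complex vector space `X` together with a
norm `W n` on each matrix space `M_n(X)` satisfying the conditions (WI) and (WII). -/
structure NRNorm (X : Type u) [AddCommGroup X] [Module ℂ X] where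
  W : ∀ n : ℕ, Matrix (Fin n) (Fin n) X → ℝ
  nonneg : ∀ (n : ℕ) (x : Matrix (Fin n) (Fin n) X), 0 ≤ W n x
  eq_zero_iff : ∀ (n : ℕ) (x : Matrix (Fin n) (Fin n) X), W n x = 0 ↔ x = 0
  add_le : ∀ (n : ℕ) (x y : Matrix (Fin n) (Fin n) X), W n (x + y) ≤ W n x + W n y
  smul_eq : ∀ (n : ℕ) (c : ℂ) (x : Matrix (Fin n) (Fin n) X), W n (c • x) = ‖c‖ * W n x
  cond_WI : ∀ (m n : ℕ) (x : Matrix (Fin m) (Fin m) X) (y : Matrix (Fin n) (Fin n) X),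
    W (m + n) (blockDiag x y) = max (W m x) (W n y)
  cond_WII : ∀ (m n : ℕ) (α : Matrix (Fin n) (Fin m) ℂ) (x : Matrix (Fin m) (Fin m) X),
    W n (scalarMulRight (scalarMulLeft α x) αᴴ) ≤ matOpNorm α ^ 2 * W m x

/-- An (abstract) operator space: a complex vector space `X` together with a norm `O n` on each
matrix space `M_n(X)` satisfying Ruan's axioms (OI) and (OII). -/
structure OSNorm (X : Type u) [AddCommGroup X] [Module ℂ X] where
  O : ∀ n : ℕ, Matrix (Fin n) (Fin n) X → ℝ
  nonneg : ∀ (n : ℕ) (x : Matrix (Fin n) (Fin n) X), 0 ≤ O n x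
  eq_zero_iff : ∀ (n : ℕ) (x : Matrix (Fin n) (Fin n) X), O n x = 0 ↔ x = 0
  add_le : ∀ (n : ℕ) (x y : Matrix (Fin n) (Fin n) X), O n (x + y) ≤ O n x + O n y
  smul_eq : ∀ (n : ℕ) (c : ℂ) (x : Matrix (Fin n) (Fin n) X), O n (c • x) = ‖c‖ * O n x
  cond_OI : ∀ (m n : ℕ) (x : Matrix (Fin m) (Fin m) X) (y : Matrix (Fin n) (Fin n) X),
    O (m + n) (blockDiag x y) = max (O m x) (O n y)
  cond_OII : ∀ (m n : ℕ) (α : Matrix (Fin n) (Fin m) ℂ) (x : Matrix (Fin m) (Fin m) X)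
    (β : Matrix (Fin m) (Fin n) ℂ),
    O n (scalarMulRight (scalarMulLeft α x) β) ≤ matOpNorm α * O m x * matOpNorm β

/-- The completely bounded norm (valued in `[0, ∞]`) of a linear map, with respect to given
matrix norm sequences on the domain and the codomain. -/
def cbNorm {X Y : Type*} (WX : ∀ n : ℕ, Matrix (Fin n) (Fin n) X → ℝ)
    (WY : ∀ n : ℕ, Matrix (Fin n) (Fin n) Y → ℝ) (φ : X → Y) : ℝ≥0∞ :=
  ⨆ (n : ℕ) (x : Matrix (Fin n) (Fin n) X) (_ : WX n x ≤ 1),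
    ENNReal.ofReal (WY n (x.map φ))

/-- The maximal numerical radius norm affiliated with an operator space `(X, 𝒪_n)`. -/
def Wmax {X : Type u} [AddCommGroup X] [Module ℂ X] (OS : OSNorm X)
    (n : ℕ) (x : Matrix (Fin n) (Fin n) X) : ℝ :=
  sInf {t | ∃ (r : ℕ) (a : Matrix (Fin n) (Fin r) ℂ) (y : Matrix (Fin r) (Fin r) X)
      (b : Matrix (Fin r) (Fin n) ℂ),
    x = scalarMulRight (scalarMulLeft a y) b ∧ OS.O r y = 1 ∧
      t = (1 / 2) * matOpNorm (a * aᴴ + bᴴ * b)}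

/-- A complex Hilbert space together with a linear map of `X` into its bounded operators. -/
structure HilbertRep (X : Type u) [AddCommGroup X] [Module ℂ X] where
  H : Type u
  [instN : NormedAddCommGroup H]
  [instI : InnerProductSpace ℂ H]
  [instC : CompleteSpace H]
  Φ : X →ₗ[ℂ] (H →L[ℂ] H)

attribute [instance] HilbertRep.instN HilbertRep.instI HilbertRep.instC

end
section Aux

open scoped Matrix.Norms.L2Operator

lemma matOpNorm_eq_l2 {m n : ℕ} (α : Matrix (Fin m) (Fin n) ℂ) : matOpNorm α = ‖α‖ := rfl

lemma matOpNorm_sq {m n : ℕ} (α : Matrix (Fin m) (Fin n) ℂ) :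
    matOpNorm α ^ 2 = matOpNorm (α * αᴴ) := by
  have h := Matrix.l2_opNorm_conjTranspose_mul_self (αᴴ)
  rw [Matrix.conjTranspose_conjTranspose] at h
  rw [matOpNorm_eq_l2, matOpNorm_eq_l2, h, Matrix.l2_opNorm_conjTranspose, sq]

/-- The row block matrix `(a | bᴴ)`. -/
noncomputable def glue {n r : ℕ} (a : Matrix (Fin n) (Fin r) ℂ) (b : Matrix (Fin r) (Fin n) ℂ) :
    Matrix (Fin n) (Fin (r + r)) ℂ :=
  Matrix.of fun i j => Sum.elim (a i) (fun k => bᴴ i k) (finSumFinEquiv.symm j)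

lemma sum_fin_add {M : Type*} [AddCommMonoid M] {r : ℕ} (f : Fin (r + r) → M) :
    ∑ l, f l = (∑ k : Fin r, f (finSumFinEquiv (Sum.inl k)))
      + ∑ k : Fin r, f (finSumFinEquiv (Sum.inr k)) := by
  rw [← Equiv.sum_comp finSumFinEquiv f, Fintype.sum_sum_type]

lemma glue_mul {n r : ℕ} (a : Matrix (Fin n) (Fin r) ℂ) (b : Matrix (Fin r) (Fin n) ℂ) :
    glue a b * (glue a b)ᴴ = a * aᴴ + bᴴ * b := by
  ext i j
  rw [Matrix.mul_apply, sum_fin_add]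
  simp only [glue, Matrix.conjTranspose_apply, Matrix.of_apply, Equiv.symm_apply_apply]
  simp [ Matrix.conjTranspose_apply, Matrix.mul_apply, mul_comm]

lemma glue_corner {Y : Type*} [AddCommGroup Y] [Module ℂ Y] {n r : ℕ}
    (a : Matrix (Fin n) (Fin r) ℂ) (b : Matrix (Fin r) (Fin n) ℂ)
    (z : Matrix (Fin r) (Fin r) Y) :
    scalarMulRight (scalarMulLeft (glue a b) (cornerBlock z)) (glue a b)ᴴ
      = scalarMulRight (scalarMulLeft a z) b := by
  ext i j
  show (∑ l, (glue a b)ᴴ l j • ∑ l', glue a b i l' • cornerBlock z l' l) = _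
  rw [sum_fin_add]
  simp only [sum_fin_add fun l' => glue a b i l' • cornerBlock z l' _]
  simp only [glue, cornerBlock, Matrix.conjTranspose_apply, Matrix.of_apply, Matrix.submatrix_apply, Equiv.symm_apply_apply]
  simp [ Matrix.conjTranspose_apply, Matrix.fromBlocks,
    scalarMulLeft, scalarMulRight]

lemma map_scalarMul {X : Type u} {Y : Type v} [AddCommGroup X] [Module ℂ X]
    [AddCommGroup Y] [Module ℂ Y] (φ : X →ₗ[ℂ] Y) {m n k : ℕ}
    (a : Matrix (Fin m) (Fin n) ℂ) (x : Matrix (Fin n) (Fin n) X)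
    (b : Matrix (Fin n) (Fin k) ℂ) :
    (scalarMulRight (scalarMulLeft a x) b).map ⇑φ
      = scalarMulRight (scalarMulLeft a (x.map ⇑φ)) b := by
  ext i j
  simp [scalarMulLeft, scalarMulRight, Matrix.map_apply, map_sum, map_smul]

lemma scalarMulLeft_smul_one {X : Type u} [AddCommGroup X] [Module ℂ X] {n : ℕ}
    (c : ℂ) (x : Matrix (Fin n) (Fin n) X) :
    scalarMulLeft (c • (1 : Matrix (Fin n) (Fin n) ℂ)) x = c • x := by
  ext i j
  simp [scalarMulLeft, Matrix.one_apply, smul_smul, ite_smul, Finset.sum_ite_eq]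

lemma scalarMulRight_one {X : Type u} [AddCommGroup X] [Module ℂ X] {n m : ℕ}
    (x : Matrix (Fin m) (Fin n) X) :
    scalarMulRight x (1 : Matrix (Fin n) (Fin n) ℂ) = x := by
  ext i j
  simp [scalarMulRight, Matrix.one_apply, ite_smul, Finset.sum_ite_eq]

end Aux

/-- Lemma 3.7: if `𝒲` is affiliated with `(Y, 𝒪'_n)` and `φ : X → Y` is completely
bounded, then `𝒲(φ : 𝒲_max(X) → 𝒲(Y))_cb ≤ 𝒪(φ)_cb`. -/
theorem stmt_16 {X : Type u} {Y : Type v} [AddCommGroup X] [Module ℂ X]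
    [AddCommGroup Y] [Module ℂ Y] (OS : OSNorm X) (OS' : OSNorm Y) (WN' : NRNorm Y)
    (hOW' : ∀ (n : ℕ) (y : Matrix (Fin n) (Fin n) Y),
      WN'.W (n + n) (cornerBlock y) = (1 / 2) * OS'.O n y)
    (φ : X →ₗ[ℂ] Y) (hcb : cbNorm OS.O OS'.O ⇑φ ≠ ⊤) :
    cbNorm (Wmax OS) WN'.W ⇑φ ≤ cbNorm OS.O OS'.O ⇑φ := by
  refine iSup_le fun n => iSup_le fun x => iSup_le fun hx => ?_
  rw [ENNReal.ofReal_le_iff_le_toReal hcb]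
  set K := (cbNorm OS.O OS'.O ⇑φ).toReal with hKdef
  have hK0 : (0:ℝ) ≤ K := ENNReal.toReal_nonneg
  have hdecomp : ∀ (r : ℕ) (a : Matrix (Fin n) (Fin r) ℂ) (y : Matrix (Fin r) (Fin r) X)
      (b : Matrix (Fin r) (Fin n) ℂ), x = scalarMulRight (scalarMulLeft a y) b →
      OS.O r y = 1 →
      WN'.W n (x.map ⇑φ) ≤ ((1:ℝ)/2) * matOpNorm (a * aᴴ + bᴴ * b) * K := by
    intro r a y b hxd hy1
    have hOy : OS'.O r (y.map ⇑φ) ≤ K := by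
      refine (ENNReal.ofReal_le_iff_le_toReal hcb).mp ?_
      exact le_iSup_of_le r (le_iSup_of_le y (le_iSup_of_le (le_of_eq hy1) le_rfl))
    have hOy0 : 0 ≤ OS'.O r (y.map ⇑φ) := OS'.nonneg _ _
    have hxm : x.map ⇑φ
        = scalarMulRight (scalarMulLeft (glue a b) (cornerBlock (y.map ⇑φ))) (glue a b)ᴴ := by
      rw [hxd, map_scalarMul φ a y b, glue_corner]
    rw [hxm]
    calc WN'.W n _ ≤ matOpNorm (glue a b) ^ 2 * WN'.W (r + r) (cornerBlock (y.map ⇑φ)) :=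
        WN'.cond_WII _ _ _ _
      _ = matOpNorm (glue a b) ^ 2 * ((1/2) * OS'.O r (y.map ⇑φ)) := by rw [hOW']
      _ ≤ matOpNorm (glue a b) ^ 2 * ((1/2) * K) :=
        mul_le_mul_of_nonneg_left (by linarith) (sq_nonneg _)
      _ = ((1:ℝ)/2) * matOpNorm (a * aᴴ + bᴴ * b) * K := by
        rw [matOpNorm_sq, glue_mul]; ring
  by_cases hx0 : x = 0
  · have : x.map ⇑φ = 0 := by
      subst hx0; ext i j; simp [Matrix.map_apply]
    rw [this]
    have h0 : WN'.W n (0 : Matrix (Fin n) (Fin n) Y) = 0 := (WN'.eq_zero_iff n 0).mpr rfl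
    rw [h0]; exact hK0
  · set S : Set ℝ := {t | ∃ (r : ℕ) (a : Matrix (Fin n) (Fin r) ℂ)
        (y : Matrix (Fin r) (Fin r) X) (b : Matrix (Fin r) (Fin n) ℂ),
      x = scalarMulRight (scalarMulLeft a y) b ∧ OS.O r y = 1 ∧
        t = (1 / 2) * matOpNorm (a * aᴴ + bᴴ * b)} with hS
    have hOx : OS.O n x ≠ 0 := fun h => hx0 ((OS.eq_zero_iff n x).mp h)
    have hOxC : ((OS.O n x : ℝ) : ℂ) ≠ 0 := by exact_mod_cast hOx
    have hSne : S.Nonempty := by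
      refine ⟨(1 / 2) * matOpNorm (((OS.O n x : ℝ) : ℂ) • 1 * (((OS.O n x : ℝ) : ℂ) • 1)ᴴ
          + (1 : Matrix (Fin n) (Fin n) ℂ)ᴴ * 1), n, ((OS.O n x : ℝ) : ℂ) • 1,
        (((OS.O n x : ℝ) : ℂ))⁻¹ • x, 1, ?_, ?_, rfl⟩
      · rw [scalarMulRight_one, scalarMulLeft_smul_one, smul_smul,
          mul_inv_cancel₀ hOxC, one_smul]
      · rw [OS.smul_eq]
        have : ‖(((OS.O n x : ℝ) : ℂ))⁻¹‖ = (OS.O n x)⁻¹ := by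
          rw [norm_inv, Complex.norm_real, Real.norm_eq_abs,
            abs_of_pos (lt_of_le_of_ne (OS.nonneg n x) (Ne.symm hOx))]
        rw [this, inv_mul_cancel₀ hOx]
    have hsInf : sInf S ≤ 1 := hx
    have hmain : ∀ ε : ℝ, 0 < ε → WN'.W n (x.map ⇑φ) ≤ (1 + ε) * K := by
      intro ε hε
      obtain ⟨t, htS, htlt⟩ := Real.lt_sInf_add_pos hSne hε
      obtain ⟨r, a, y, b, hxd, hy1, ht⟩ := htS
      have h1 := hdecomp r a y b hxd hy1
      have ht1 : t ≤ 1 + ε := le_of_lt (lt_of_lt_of_le htlt (by linarith))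
      calc WN'.W n (x.map ⇑φ) ≤ t * K := by rw [ht]; exact h1
        _ ≤ (1 + ε) * K := mul_le_mul_of_nonneg_right ht1 hK0
    refine le_of_forall_pos_le_add fun δ hδ => ?_
    have h1 := hmain (δ / (K + 1)) (by positivity)
    have h2 : (1 + δ / (K + 1)) * K ≤ K + δ := by
      have h3 : δ / (K + 1) * K ≤ δ := by
        rw [div_mul_eq_mul_div, div_le_iff₀ (by linarith)]; nlinarith
      nlinarith
    linarith
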